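/- Let M(k₁,k₂) be the 4×4 real antisymmetric matrix with M_{12} = (k₁−1)/k₁, M_{14} = M_{23} = 1/√(k₁k₂), M_{34} = (k₂−1)/k₂ (antisymmetric completion, other entries zero). Then the operator norm of the difference M(k₁,k₂) − D, minimized over all block-diagonal real antisymmetric matrices D = diag([[0,a],[−a,0]],[[0,b],[−b,0]]) with |a|,|b| ≤ 1, equals 1/√(k₁k₂). -/

import Mathlib

open Matrix

/-- Operator (spectral) norm of a real square matrix. -/
noncomputable def opNorm {n : Type*} [Fintype n] [DecidableEq n]
    (M : Matrix n n ℝ) : ℝ :=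
  ‖Matrix.toEuclideanCLM (𝕜 := ℝ) M‖

lemma norm_clm_apply (A : Matrix (Fin 4) (Fin 4) ℝ) (v : Fin 4 → ℝ) :
    ‖Matrix.toEuclideanCLM (𝕜 := ℝ) A ((WithLp.equiv 2 _).symm v)‖
      = Real.sqrt (∑ i, (A.mulVec v i)^2) := by
  rw [WithLp.equiv_symm_apply, Matrix.toEuclideanCLM_toLp, EuclideanSpace.norm_eq]
  simp [Real.norm_eq_abs, sq_abs]

lemma norm_vec (v : Fin 4 → ℝ) :
    ‖((WithLp.equiv 2 (Fin 4 → ℝ)).symm v : EuclideanSpace ℝ (Fin 4))‖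
      = Real.sqrt (∑ i, (v i)^2) := by
  rw [EuclideanSpace.norm_eq]
  simp [Real.norm_eq_abs, sq_abs]

/-- For the `(k₁,k₂)`-extendible two-mode CM `M(k₁,k₂)`, the operator norm distance to
the set of block-diagonal antisymmetric CMs `diag([[0,a],[−a,0]],[[0,b],[−b,0]])`,
`|a|,|b| ≤ 1`, has least value `1/√(k₁k₂)`. -/
theorem stmt14 (k₁ k₂ : ℕ) (hk₁ : 1 ≤ k₁) (hk₂ : 1 ≤ k₂)
    (M : Matrix (Fin 4) (Fin 4) ℝ)
    (hM : M = !![0, ((k₁ : ℝ) - 1) / k₁, 0, 1 / Real.sqrt (k₁ * k₂);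
                 -(((k₁ : ℝ) - 1) / k₁), 0, 1 / Real.sqrt (k₁ * k₂), 0;
                 0, -(1 / Real.sqrt (k₁ * k₂)), 0, ((k₂ : ℝ) - 1) / k₂;
                 -(1 / Real.sqrt (k₁ * k₂)), 0, -(((k₂ : ℝ) - 1) / k₂), 0]) :
    IsLeast {t : ℝ | ∃ a b : ℝ, |a| ≤ 1 ∧ |b| ≤ 1 ∧
        t = opNorm (M - !![0, a, 0, 0; -a, 0, 0, 0; 0, 0, 0, b; 0, 0, -b, 0])}
      (1 / Real.sqrt (k₁ * k₂)) := by
  have hk₁' : (0:ℝ) < k₁ := by exact_mod_cast hk₁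
  have hk₂' : (0:ℝ) < k₂ := by exact_mod_cast hk₂
  have hk₁'' : (1:ℝ) ≤ k₁ := by exact_mod_cast hk₁
  have hk₂'' : (1:ℝ) ≤ k₂ := by exact_mod_cast hk₂
  set c : ℝ := 1 / Real.sqrt (k₁ * k₂) with hc
  have hcpos : 0 < c := by
    apply div_pos one_pos
    exact Real.sqrt_pos.mpr (by positivity)
  constructor
  · -- membership: take a = (k₁-1)/k₁, b = (k₂-1)/k₂
    refine ⟨((k₁:ℝ) - 1) / k₁, ((k₂:ℝ) - 1) / k₂, ?_, ?_, ?_⟩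
    · rw [abs_div, abs_of_pos hk₁', div_le_one hk₁']
      rw [abs_sub_le_iff]
      constructor <;> linarith
    · rw [abs_div, abs_of_pos hk₂', div_le_one hk₂']
      rw [abs_sub_le_iff]
      constructor <;> linarith
    · have hN : M - !![0, ((k₁:ℝ) - 1) / k₁, 0, 0; -(((k₁:ℝ) - 1) / k₁), 0, 0, 0;
          0, 0, 0, ((k₂:ℝ) - 1) / k₂; 0, 0, -(((k₂:ℝ) - 1) / k₂), 0]
          = !![0, 0, 0, c; 0, 0, c, 0; 0, -c, 0, 0; -c, 0, 0, 0] := by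
        subst hM
        ext i j
        fin_cases i <;> fin_cases j <;> simp [hc, Matrix.vecHead, Matrix.vecTail]
      rw [hN]
      set N : Matrix (Fin 4) (Fin 4) ℝ :=
        !![0, 0, 0, c; 0, 0, c, 0; 0, -c, 0, 0; -c, 0, 0, 0] with hNdef
      -- show opNorm N = c
      refine le_antisymm ?_ ?_
      · -- c ≤ opNorm N via the first basis vector
        have h1 : ‖Matrix.toEuclideanCLM (𝕜 := ℝ) N ((WithLp.equiv 2 _).symm ![1,0,0,0])‖
            ≤ opNorm N := by
          apply ContinuousLinearMap.unit_le_opNorm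
          rw [norm_vec]
          norm_num [Fin.sum_univ_four, Matrix.vecHead, Matrix.vecTail]
          simp [Matrix.cons_val]
        rw [norm_clm_apply] at h1
        have hmv : ∑ i, (N.mulVec ![1,0,0,0] i)^2 = c^2 := by
          simp [hNdef, Matrix.mulVec, dotProduct, Fin.sum_univ_four, Matrix.vecHead, Matrix.vecTail]
        rw [hmv, Real.sqrt_sq hcpos.le] at h1
        exact h1
      · -- opNorm N ≤ c
        apply ContinuousLinearMap.opNorm_le_bound _ hcpos.le
        intro x
        have hx : x = (WithLp.equiv 2 (Fin 4 → ℝ)).symm (WithLp.equiv 2 _ x) :=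
          (Equiv.symm_apply_apply _ _).symm
        set v : Fin 4 → ℝ := WithLp.equiv 2 _ x with hv
        rw [hx, norm_clm_apply, norm_vec]
        have hmv : ∑ i, (N.mulVec v i)^2 = c^2 * ∑ i, (v i)^2 := by
          simp [hNdef, Matrix.mulVec, dotProduct, Fin.sum_univ_four, Matrix.vecHead, Matrix.vecTail]
          ring
        rw [hmv, Real.sqrt_mul (by positivity), Real.sqrt_sq hcpos.le]
  · -- lower bound
    rintro t ⟨a, b, ha, hb, rfl⟩
    set A := M - !![0, a, 0, 0; -a, 0, 0, 0; 0, 0, 0, b; 0, 0, -b, 0] with hA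
    have h1 : ‖Matrix.toEuclideanCLM (𝕜 := ℝ) A ((WithLp.equiv 2 _).symm ![1,0,0,0])‖
        ≤ opNorm A := by
      apply ContinuousLinearMap.unit_le_opNorm
      rw [norm_vec]
      norm_num [Fin.sum_univ_four, Matrix.vecHead, Matrix.vecTail]
      simp [Matrix.cons_val]
    rw [norm_clm_apply] at h1
    refine le_trans ?_ h1
    have hmv : ∑ i, (A.mulVec ![1,0,0,0] i)^2
        = (((k₁:ℝ) - 1) / k₁ - a)^2 + c^2 := by
      subst hM
      simp [hA, Matrix.mulVec, dotProduct, Fin.sum_univ_four, hc, Matrix.vecHead, Matrix.vecTail]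
      ring
    rw [hmv]
    calc c = Real.sqrt (c^2) := (Real.sqrt_sq hcpos.le).symm
    _ ≤ _ := Real.sqrt_le_sqrt (by nlinarith [sq_nonneg (((k₁:ℝ) - 1) / k₁ - a)])
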